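/- Rank-2 coincidence of upper and lower bounds: with exchange relations x₁x'₁ = P₁(x₂) and x₂x'₂ = P₂(x₁) as above (P₁, P₂ binomials with invertible coefficients and positive exponents, or constants in the degenerate case with P₁ and P₂ coprime), one has ZP[x₁, x'₁, x₂^{±1}] ∩ ZP[x₁^{±1}, x₂, x'₂] = ZP[x₁, x'₁, x₂, x'₂]. -/

import Mathlib

open MvPolynomial

/-- The image of the variable `xᵢ` in the field of rational functions over `R`. -/
noncomputable def Xfrac (R : Type*) [CommRing R] [IsDomain R] (n : ℕ) (i : Fin n) :
    FractionRing (MvPolynomial (Fin n) R) :=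
  algebraMap (MvPolynomial (Fin n) R) _ (MvPolynomial.X i)

open AddMonoidAlgebra

set_option linter.unusedSectionVars false
set_option maxHeartbeats 1000000

namespace RankTwoAux

variable {R : Type*} [CommRing R] [IsDomain R]

abbrev G (R : Type*) [CommRing R] := AddMonoidAlgebra R (ℤ × ℤ)

lemma single_eq_smul (p : ℤ × ℤ) (a : R) : (single p a : G R) = a • single p 1 := by
  rw [AddMonoidAlgebra.smul_single', mul_one]

lemma single_zero_mul (a : R) (z : G R) : single ((0:ℤ), (0:ℤ)) a * z = a • z := by
  rw [single_eq_smul, smul_mul_assoc]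
  congr 1
  rw [show ((0:ℤ), (0:ℤ)) = (0 : ℤ × ℤ) from rfl, ← AddMonoidAlgebra.one_def, one_mul]

section Gside
variable (q₁ r₁ q₂ r₂ : Rˣ) (b c : ℕ)

noncomputable def P₁ : G R := single ((0 : ℤ), (c : ℤ)) (q₂ : R) + single (0, 0) (r₂ : R)
noncomputable def P₂ : G R := single (((b : ℤ)), (0 : ℤ)) (q₁ : R) + single (0, 0) (r₁ : R)

noncomputable def UJ (J : ℕ) : Submodule R (G R) :=
  Submodule.span R {g | ∃ (j m : ℕ) (n : ℤ), j ≤ J ∧ g = P₁ q₂ r₂ c ^ j * single ((m : ℤ) - j, n) 1}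

noncomputable def U0 : Submodule R (G R) :=
  Submodule.span R {g | ∃ (j m : ℕ) (n : ℤ), g = P₁ q₂ r₂ c ^ j * single ((m : ℤ) - j, n) 1}

noncomputable def LK (K : ℕ) : Submodule R (G R) :=
  Submodule.span R {g | ∃ (k n : ℕ) (m : ℤ), k ≤ K ∧ g = P₂ q₁ r₁ b ^ k * single (m, (n : ℤ) - k) 1}

noncomputable def L0 : Submodule R (G R) :=
  Submodule.span R {g | ∃ (k n : ℕ) (m : ℤ), g = P₂ q₁ r₁ b ^ k * single (m, (n : ℤ) - k) 1}

noncomputable def A0 : Submodule R (G R) :=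
  Submodule.span R {g | ∃ (j k m n : ℕ),
    g = P₁ q₂ r₂ c ^ j * P₂ q₁ r₁ b ^ k * single ((m : ℤ) - j, (n : ℤ) - k) 1}

variable {q₁ r₁ q₂ r₂ b c}

lemma P1_mul_single (s t : ℤ) (a : R) :
    P₁ q₂ r₂ c * single (s, t) a =
      (q₂ : R) • single (s, t + c) a + (r₂ : R) • single (s, t) a := by
  simp [P₁, add_mul, single_mul_single, Finsupp.smul_single', Prod.mk_add_mk, add_comm]

lemma P2_mul_single (s t : ℤ) (a : R) :
    P₂ q₁ r₁ b * single (s, t) a =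
      (q₁ : R) • single (s + b, t) a + (r₁ : R) • single (s, t) a := by
  simp [P₂, add_mul, single_mul_single, Finsupp.smul_single', Prod.mk_add_mk, add_comm]

lemma G1 (J : ℕ) : ∀ (j m : ℕ) (n : ℤ), j ≤ J + m →
    P₁ q₂ r₂ c ^ j * single ((m : ℤ) - j, n) 1 ∈ UJ q₂ r₂ c (R := R) J := by
  intro j
  induction j with
  | zero => intro m n _; exact Submodule.subset_span ⟨0, m, n, Nat.zero_le J, rfl⟩
  | succ j ih =>
    intro m n hj
    by_cases hJ : j + 1 ≤ J
    · exact Submodule.subset_span ⟨j + 1, m, n, hJ, rfl⟩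
    · have hm : 1 ≤ m := by omega
      obtain ⟨m', rfl⟩ : ∃ m', m = m' + 1 := ⟨m - 1, by omega⟩
      have hco : ((m' + 1 : ℕ) : ℤ) - (j + 1 : ℕ) = (m' : ℤ) - j := by push_cast; ring
      rw [hco, pow_succ, mul_assoc, P1_mul_single, mul_add, mul_smul_comm, mul_smul_comm]
      exact Submodule.add_mem _
        (Submodule.smul_mem _ _ (ih m' (n + c) (by omega)))
        (Submodule.smul_mem _ _ (ih m' n (by omega)))

lemma LG1 (K : ℕ) : ∀ (k n : ℕ) (m : ℤ), k ≤ K + n →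
    P₂ q₁ r₁ b ^ k * single (m, (n : ℤ) - k) 1 ∈ LK q₁ r₁ b (R := R) K := by
  intro k
  induction k with
  | zero => intro n m _; exact Submodule.subset_span ⟨0, n, m, Nat.zero_le K, rfl⟩
  | succ k ih =>
    intro n m hk
    by_cases hK : k + 1 ≤ K
    · exact Submodule.subset_span ⟨k + 1, n, m, hK, rfl⟩
    · have hn : 1 ≤ n := by omega
      obtain ⟨n', rfl⟩ : ∃ n', n = n' + 1 := ⟨n - 1, by omega⟩
      have hco : ((n' + 1 : ℕ) : ℤ) - (k + 1 : ℕ) = (n' : ℤ) - k := by push_cast; ring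
      rw [hco, pow_succ, mul_assoc, P2_mul_single, mul_add, mul_smul_comm, mul_smul_comm]
      exact Submodule.add_mem _
        (Submodule.smul_mem _ _ (ih n' (m + b) (by omega)))
        (Submodule.smul_mem _ _ (ih n' m (by omega)))

lemma G2 {J : ℕ} {z : G R} (hz : z ∈ UJ q₂ r₂ c (R := R) J) (s : ℕ) (t : ℤ) :
    single ((s : ℤ), t) 1 * z ∈ UJ q₂ r₂ c (R := R) J := by
  induction hz using Submodule.span_induction with
  | mem g hg =>
    obtain ⟨j, m, n, hj, rfl⟩ := hg
    rw [mul_comm, mul_assoc, single_mul_single, one_mul, Prod.mk_add_mk]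
    have : ((m : ℤ) - j + s, n + t) = (((m + s : ℕ) : ℤ) - j, n + t) := by
      simp only [Prod.mk.injEq]
      refine ⟨by push_cast; ring, by trivial⟩
    rw [this]
    exact Submodule.subset_span ⟨j, m + s, n + t, hj, rfl⟩
  | zero => simp
  | add x y _ _ hx hy => rw [mul_add]; exact Submodule.add_mem _ hx hy
  | smul a x _ hx => rw [mul_smul_comm]; exact Submodule.smul_mem _ _ hx

lemma LG2 {K : ℕ} {z : G R} (hz : z ∈ LK q₁ r₁ b (R := R) K) (s : ℤ) (t : ℕ) :
    single (s, (t : ℤ)) 1 * z ∈ LK q₁ r₁ b (R := R) K := by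
  induction hz using Submodule.span_induction with
  | mem g hg =>
    obtain ⟨k, n, m, hk, rfl⟩ := hg
    rw [mul_comm, mul_assoc, single_mul_single, one_mul, Prod.mk_add_mk]
    have : (m + s, (n : ℤ) - k + t) = (m + s, ((n + t : ℕ) : ℤ) - k) := by
      simp only [Prod.mk.injEq]
      refine ⟨by trivial, by push_cast; ring⟩
    rw [this]
    exact Submodule.subset_span ⟨k, n + t, m + s, hk, rfl⟩
  | zero => simp
  | add x y _ _ hx hy => rw [mul_add]; exact Submodule.add_mem _ hx hy
  | smul a x _ hx => rw [mul_smul_comm]; exact Submodule.smul_mem _ _ hx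

lemma P2_mul_UJ {J : ℕ} {z : G R} (hz : z ∈ UJ q₂ r₂ c (R := R) J) :
    P₂ q₁ r₁ b * z ∈ UJ q₂ r₂ c (R := R) J := by
  have h : P₂ q₁ r₁ b * z = (q₁ : R) • (single ((b:ℤ), (0:ℤ)) 1 * z) + (r₁ : R) • z := by
    rw [P₂, add_mul, single_zero_mul]
    congr 1
    rw [single_eq_smul, smul_mul_assoc]
  rw [h]
  exact Submodule.add_mem _ (Submodule.smul_mem _ _ (G2 hz b 0))
    (Submodule.smul_mem _ _ hz)

lemma P2_pow_mul_UJ {J : ℕ} {z : G R} (hz : z ∈ UJ q₂ r₂ c (R := R) J) (k : ℕ) :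
    P₂ q₁ r₁ b ^ k * z ∈ UJ q₂ r₂ c (R := R) J := by
  induction k with
  | zero => simpa using hz
  | succ k ih => rw [pow_succ, mul_comm (P₂ q₁ r₁ b ^ k), mul_assoc]; exact P2_mul_UJ ih

lemma P1_mul_LK {K : ℕ} {z : G R} (hz : z ∈ LK q₁ r₁ b (R := R) K) :
    P₁ q₂ r₂ c * z ∈ LK q₁ r₁ b (R := R) K := by
  have h : P₁ q₂ r₂ c * z = (q₂ : R) • (single ((0:ℤ), (c:ℤ)) 1 * z) + (r₂ : R) • z := by
    rw [P₁, add_mul, single_zero_mul]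
    congr 1
    rw [single_eq_smul, smul_mul_assoc]
  rw [h]
  exact Submodule.add_mem _ (Submodule.smul_mem _ _ (LG2 hz 0 c))
    (Submodule.smul_mem _ _ hz)

lemma P1_pow_mul_LK {K : ℕ} {z : G R} (hz : z ∈ LK q₁ r₁ b (R := R) K) (j : ℕ) :
    P₁ q₂ r₂ c ^ j * z ∈ LK q₁ r₁ b (R := R) K := by
  induction j with
  | zero => simpa using hz
  | succ j ih => rw [pow_succ, mul_comm (P₁ q₂ r₂ c ^ j), mul_assoc]; exact P1_mul_LK ih

lemma UJ_le_U0 (J : ℕ) : UJ q₂ r₂ c (R := R) J ≤ U0 q₂ r₂ c := by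
  apply Submodule.span_le.2
  rintro g ⟨j, m, n, _, rfl⟩
  exact Submodule.subset_span ⟨j, m, n, rfl⟩

lemma LK_le_L0 (K : ℕ) : LK q₁ r₁ b (R := R) K ≤ L0 q₁ r₁ b := by
  apply Submodule.span_le.2
  rintro g ⟨k, n, m, _, rfl⟩
  exact Submodule.subset_span ⟨k, n, m, rfl⟩

lemma mem_U0_iff {y : G R} : y ∈ U0 q₂ r₂ c ↔ ∃ J, y ∈ UJ q₂ r₂ c (R := R) J := by
  constructor
  · intro hy
    induction hy using Submodule.span_induction with
    | mem g hg => obtain ⟨j, m, n, rfl⟩ := hg; exact ⟨j, Submodule.subset_span ⟨j, m, n, le_refl j, rfl⟩⟩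
    | zero => exact ⟨0, Submodule.zero_mem _⟩
    | add x y _ _ hx hy =>
      obtain ⟨J, hJ⟩ := hx; obtain ⟨J', hJ'⟩ := hy
      refine ⟨max J J', Submodule.add_mem _ ?_ ?_⟩
      · refine SetLike.le_def.1 (Submodule.span_mono (fun g hg => ?_)) hJ
        obtain ⟨j, m, n, hj, hgg⟩ := hg
        exact ⟨j, m, n, le_trans hj (le_max_left _ _), hgg⟩
      · refine SetLike.le_def.1 (Submodule.span_mono (fun g hg => ?_)) hJ'
        obtain ⟨j, m, n, hj, hgg⟩ := hg
        exact ⟨j, m, n, le_trans hj (le_max_right _ _), hgg⟩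
    | smul a x _ hx => obtain ⟨J, hJ⟩ := hx; exact ⟨J, Submodule.smul_mem _ _ hJ⟩
  · rintro ⟨J, hJ⟩; exact UJ_le_U0 J hJ

lemma mem_L0_iff {y : G R} : y ∈ L0 q₁ r₁ b ↔ ∃ K, y ∈ LK q₁ r₁ b (R := R) K := by
  constructor
  · intro hy
    induction hy using Submodule.span_induction with
    | mem g hg => obtain ⟨k, n, m, rfl⟩ := hg; exact ⟨k, Submodule.subset_span ⟨k, n, m, le_refl k, rfl⟩⟩
    | zero => exact ⟨0, Submodule.zero_mem _⟩
    | add x y _ _ hx hy =>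
      obtain ⟨K, hK⟩ := hx; obtain ⟨K', hK'⟩ := hy
      refine ⟨max K K', Submodule.add_mem _ ?_ ?_⟩
      · refine SetLike.le_def.1 (Submodule.span_mono (fun g hg => ?_)) hK
        obtain ⟨k, n, m, hk, hgg⟩ := hg
        exact ⟨k, n, m, le_trans hk (le_max_left _ _), hgg⟩
      · refine SetLike.le_def.1 (Submodule.span_mono (fun g hg => ?_)) hK'
        obtain ⟨k, n, m, hk, hgg⟩ := hg
        exact ⟨k, n, m, le_trans hk (le_max_right _ _), hgg⟩
    | smul a x _ hx => obtain ⟨K, hK⟩ := hx; exact ⟨K, Submodule.smul_mem _ _ hK⟩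
  · rintro ⟨K, hK⟩; exact LK_le_L0 K hK

lemma A0_le_U0 : A0 q₁ r₁ q₂ r₂ b c ≤ U0 q₂ r₂ c (R := R) := by
  apply Submodule.span_le.2
  rintro g ⟨j, k, m, n, rfl⟩
  rw [mul_comm (P₁ q₂ r₂ c ^ j) (P₂ q₁ r₁ b ^ k), mul_assoc]
  exact UJ_le_U0 j (P2_pow_mul_UJ (G1 j j m _ (le_add_right (le_refl j))) k)

lemma A0_le_L0 : A0 q₁ r₁ q₂ r₂ b c ≤ L0 q₁ r₁ b (R := R) := by
  apply Submodule.span_le.2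
  rintro g ⟨j, k, m, n, rfl⟩
  rw [mul_assoc]
  exact LK_le_L0 k (P1_pow_mul_LK (LG1 k k n _ (le_add_right (le_refl k))) j)

/-! ### Support lemmas -/

lemma support_mul' {f g : G R} {S T : ℤ × ℤ → Prop} (hf : ∀ p ∈ f.coeff.support, S p)
    (hg : ∀ p ∈ g.coeff.support, T p) :
    ∀ p ∈ (f * g).coeff.support, ∃ a b, S a ∧ T b ∧ p = a + b := by
  intro p hp
  have h := AddMonoidAlgebra.support_coeff_mul_subset f g hp
  rw [Finset.mem_add] at h
  obtain ⟨a, ha, b', hb, hab⟩ := h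
  exact ⟨a, b', hf a ha, hg b' hb, hab.symm⟩

lemma support_single_sub (p : ℤ × ℤ) (a : R) :
    ∀ q ∈ (single p a : G R).coeff.support, q = p := by
  intro q hq
  exact Finset.mem_singleton.1 (Finsupp.support_single_subset hq)

lemma P2_pow_support (k : ℕ) :
    ∀ p ∈ (P₂ q₁ r₁ b ^ k : G R).coeff.support, 0 ≤ p.1 ∧ p.2 = 0 := by
  induction k with
  | zero =>
    intro p hp
    rw [pow_zero, AddMonoidAlgebra.one_def] at hp
    have := support_single_sub _ _ _ hp
    simp [this]
  | succ k ih =>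
    intro p hp
    rw [pow_succ] at hp
    have hP : ∀ p ∈ (P₂ q₁ r₁ b : G R).coeff.support, 0 ≤ p.1 ∧ p.2 = 0 := by
      intro p hp
      have h2 := Finsupp.support_add hp
      rw [Finset.mem_union] at h2
      rcases h2 with h | h
      · have := support_single_sub _ _ _ h; subst this; simp
      · have := support_single_sub _ _ _ h; subst this; simp
    obtain ⟨x, y, hx, hy, rfl⟩ := support_mul' ih hP p hp
    refine ⟨by simpa using add_nonneg hx.1 hy.1, by simp [hx.2, hy.2]⟩

lemma P1_pow_support (j : ℕ) :
    ∀ p ∈ (P₁ q₂ r₂ c ^ j : G R).coeff.support, p.1 = 0 ∧ 0 ≤ p.2 := by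
  induction j with
  | zero =>
    intro p hp
    rw [pow_zero, AddMonoidAlgebra.one_def] at hp
    have := support_single_sub _ _ _ hp
    simp [this]
  | succ j ih =>
    intro p hp
    rw [pow_succ] at hp
    have hP : ∀ p ∈ (P₁ q₂ r₂ c : G R).coeff.support, p.1 = 0 ∧ 0 ≤ p.2 := by
      intro p hp
      have h2 := Finsupp.support_add hp
      rw [Finset.mem_union] at h2
      rcases h2 with h | h
      · have := support_single_sub _ _ _ h; subst this; simp
      · have := support_single_sub _ _ _ h; subst this; simp
    obtain ⟨x, y, hx, hy, rfl⟩ := support_mul' ih hP p hp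
    refine ⟨by simp [hx.1, hy.1], by simpa using add_nonneg hx.2 hy.2⟩

/-! ### Support characterizations of the degree-zero truncations -/

lemma UJ0_supp {y : G R} (hy : y ∈ UJ q₂ r₂ c (R := R) 0) :
    ∀ p ∈ y.coeff.support, 0 ≤ p.1 := by
  induction hy using Submodule.span_induction with
  | mem g hg =>
    obtain ⟨j, m, n, hj, rfl⟩ := hg
    interval_cases j
    intro p hp
    rw [pow_zero, one_mul] at hp
    have := support_single_sub _ _ _ hp
    subst this
    simp
  | zero => simp
  | add x y _ _ hx hy =>
    intro p hp
    rcases Finset.mem_union.1 (Finsupp.support_add hp) with h | h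
    exacts [hx p h, hy p h]
  | smul a x _ hx =>
    intro p hp
    exact hx p (Finsupp.support_smul hp)

lemma LK_supp {K : ℕ} {y : G R} (hy : y ∈ LK q₁ r₁ b (R := R) K) :
    ∀ p ∈ y.coeff.support, -(K : ℤ) ≤ p.2 := by
  induction hy using Submodule.span_induction with
  | mem g hg =>
    obtain ⟨k, n, m, hk, rfl⟩ := hg
    intro p hp
    obtain ⟨x, y, hx, hy, rfl⟩ := support_mul' (P2_pow_support k)
      (support_single_sub (m, (n : ℤ) - k) (1 : R)) p hp
    subst hy
    simp only [Prod.snd_add]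
    rw [hx.2]
    omega
  | zero => simp
  | add x y _ _ hx hy =>
    intro p hp
    rcases Finset.mem_union.1 (Finsupp.support_add hp) with h | h
    exacts [hx p h, hy p h]
  | smul a x _ hx =>
    intro p hp
    exact hx p (Finsupp.support_smul hp)

lemma supp_UJ0 {y : G R} (hy : ∀ p ∈ y.coeff.support, 0 ≤ p.1) :
    y ∈ UJ q₂ r₂ c (R := R) 0 := by
  rw [← sum_coeff_single y]
  refine Submodule.sum_mem _ (fun p hp => ?_)
  show (single p (y.coeff p) : G R) ∈ _
  rw [single_eq_smul]
  refine Submodule.smul_mem _ _ (Submodule.subset_span ⟨0, p.1.toNat, p.2, le_refl 0, ?_⟩)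
  rw [pow_zero, one_mul]
  congr 1
  have h0 := hy p hp
  rw [Int.toNat_of_nonneg h0]
  simp

lemma mem_A0_of_supp {y : G R} (hy : ∀ p ∈ y.coeff.support, 0 ≤ p.1 ∧ 0 ≤ p.2) :
    y ∈ A0 q₁ r₁ q₂ r₂ b c (R := R) := by
  rw [← sum_coeff_single y]
  refine Submodule.sum_mem _ (fun p hp => ?_)
  show (single p (y.coeff p) : G R) ∈ _
  rw [single_eq_smul]
  refine Submodule.smul_mem _ _ (Submodule.subset_span ⟨0, 0, p.1.toNat, p.2.toNat, ?_⟩)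
  rw [pow_zero, pow_zero, one_mul, one_mul]
  congr 1
  obtain ⟨h1, h2⟩ := hy p hp
  rw [Int.toNat_of_nonneg h1, Int.toNat_of_nonneg h2]
  simp

/-! ### Cancellation lemma -/

lemma cancel_one (hb : 0 < b) {w : G R} {t : ℤ} (hw : ∀ p ∈ w.coeff.support, p.2 = t)
    (hPw : ∀ p ∈ (P₂ q₁ r₁ b * w).coeff.support, 0 ≤ p.1) : ∀ p ∈ w.coeff.support, 0 ≤ p.1 := by
  by_contra hcon
  push_neg at hcon
  obtain ⟨p₀, hp₀, hp₀neg⟩ := hcon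
  have hne : (w.coeff.support.image Prod.fst).Nonempty := ⟨p₀.1, Finset.mem_image_of_mem _ hp₀⟩
  set m₀ := (w.coeff.support.image Prod.fst).min' hne with hm₀def
  obtain ⟨p₁, hp₁, hp₁e⟩ := Finset.mem_image.mp ((w.coeff.support.image Prod.fst).min'_mem hne)
  have hp₁eq : p₁ = (m₀, t) := by
    rw [Prod.ext_iff]
    exact ⟨by rw [hp₁e], hw p₁ hp₁⟩
  have hm₀neg : m₀ < 0 :=
    lt_of_le_of_lt (Finset.min'_le _ _ (Finset.mem_image_of_mem _ hp₀)) hp₀neg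
  have hwm₀ : w.coeff (m₀, t) ≠ 0 := by
    rw [← hp₁eq]
    exact Finsupp.mem_support_iff.1 hp₁
  have hwmb : w.coeff (m₀ - b, t) = 0 := by
    by_contra hne2
    have hmem : (m₀ - b, t) ∈ w.coeff.support := Finsupp.mem_support_iff.2 hne2
    have := Finset.min'_le (w.coeff.support.image Prod.fst) (m₀ - b)
      (Finset.mem_image_of_mem _ hmem)
    omega
  have hval : (P₂ q₁ r₁ b * w).coeff (m₀, t) = (r₁ : R) * w.coeff (m₀, t) := by
    rw [P₂, add_mul, AddMonoidAlgebra.coeff_add, Finsupp.add_apply, AddMonoidAlgebra.coeff_single_mul_apply,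
      AddMonoidAlgebra.coeff_single_mul_apply]
    have e1 : (-((b : ℤ), (0 : ℤ)) + (m₀, t)) = (m₀ - b, t) := by
      simp [Prod.ext_iff]; ring
    have e2 : (-((0 : ℤ), (0 : ℤ)) + (m₀, t)) = (m₀, t) := by simp
    rw [e1, e2, hwmb, mul_zero, zero_add]
  have hmem : (m₀, t) ∈ (P₂ q₁ r₁ b * w).coeff.support := by
    rw [Finsupp.mem_support_iff, hval]
    exact fun h => hwm₀ ((Units.mul_right_eq_zero r₁).1 h)
  have := hPw _ hmem
  simp at this
  omega

lemma cancel_pow (hb : 0 < b) (k : ℕ) : ∀ (w : G R) (t : ℤ),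
    (∀ p ∈ w.coeff.support, p.2 = t) →
    (∀ p ∈ (P₂ q₁ r₁ b ^ k * w).coeff.support, 0 ≤ p.1) → ∀ p ∈ w.coeff.support, 0 ≤ p.1 := by
  induction k with
  | zero =>
    intro w t hw h p hp
    exact h p (by rwa [pow_zero, one_mul])
  | succ k ih =>
    intro w t hw h
    have hsupp : ∀ p ∈ (P₂ q₁ r₁ b ^ k * w : G R).coeff.support, p.2 = t := by
      intro p hp
      obtain ⟨x, y, hx, hy, rfl⟩ := support_mul' (P2_pow_support k) hw p hp
      simp [hx.2, hy]
    have heq : P₂ q₁ r₁ b ^ (k + 1) * w = P₂ q₁ r₁ b * (P₂ q₁ r₁ b ^ k * w) := by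
      rw [pow_succ, mul_comm (P₂ q₁ r₁ b ^ k) (P₂ q₁ r₁ b), mul_assoc]
    have h1 : ∀ p ∈ (P₂ q₁ r₁ b ^ k * w : G R).coeff.support, 0 ≤ p.1 :=
      cancel_one hb hsupp (by rw [← heq]; exact h)
    exact ih w t hw h1

/-! ### Decompositions of the truncations -/

lemma mul_finsupp_sum (f w : G R) : f * w = w.coeff.sum (fun p a => a • (f * single p 1)) := by
  conv_lhs => rw [← sum_coeff_single w]
  rw [Finsupp.sum, Finsupp.sum, Finset.mul_sum]
  refine Finset.sum_congr rfl (fun p hp => ?_)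
  show f * single p (w.coeff p) = _
  rw [single_eq_smul, mul_smul_comm]

lemma LK_succ_le (K : ℕ) : LK q₁ r₁ b (R := R) (K + 1) ≤ LK q₁ r₁ b K ⊔
    Submodule.span R (Set.range fun m : ℤ => P₂ q₁ r₁ b ^ (K + 1) * single (m, -((K : ℤ) + 1)) 1) := by
  apply Submodule.span_le.2
  rintro g ⟨k, n, m, hk, rfl⟩
  rcases Nat.lt_or_ge k (K + 1) with h | h
  · exact Submodule.mem_sup_left (Submodule.subset_span ⟨k, n, m, by omega, rfl⟩)
  · have hkK : k = K + 1 := by omega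
    subst hkK
    rcases Nat.eq_zero_or_pos n with hn | hn
    · subst hn
      apply Submodule.mem_sup_right
      have : ((0 : ℕ) : ℤ) - ((K + 1 : ℕ) : ℤ) = -((K : ℤ) + 1) := by push_cast; ring
      rw [this]
      exact Submodule.subset_span ⟨m, rfl⟩
    · exact Submodule.mem_sup_left (LG1 K (K + 1) n m (by omega))

lemma UJ_succ_le (J : ℕ) : UJ q₂ r₂ c (R := R) (J + 1) ≤ UJ q₂ r₂ c J ⊔
    Submodule.span R (Set.range fun n : ℤ => P₁ q₂ r₂ c ^ (J + 1) * single (-((J : ℤ) + 1), n) 1) := by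
  apply Submodule.span_le.2
  rintro g ⟨j, m, n, hj, rfl⟩
  rcases Nat.lt_or_ge j (J + 1) with h | h
  · exact Submodule.mem_sup_left (Submodule.subset_span ⟨j, m, n, by omega, rfl⟩)
  · have hjJ : j = J + 1 := by omega
    subst hjJ
    rcases Nat.eq_zero_or_pos m with hm | hm
    · subst hm
      apply Submodule.mem_sup_right
      have : ((0 : ℕ) : ℤ) - ((J + 1 : ℕ) : ℤ) = -((J : ℤ) + 1) := by push_cast; ring
      rw [this]
      exact Submodule.subset_span ⟨n, rfl⟩
    · exact Submodule.mem_sup_left (G1 J (J + 1) m n (by omega))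

/-! ### Inner induction -/

lemma inner (hb : 0 < b) : ∀ K : ℕ, ∀ y : G R, y ∈ UJ q₂ r₂ c (R := R) 0 →
    y ∈ LK q₁ r₁ b (R := R) K → y ∈ A0 q₁ r₁ q₂ r₂ b c := by
  intro K
  induction K with
  | zero =>
    intro y hU hL
    refine mem_A0_of_supp (fun p hp => ⟨UJ0_supp hU p hp, ?_⟩)
    have := LK_supp hL p hp
    omega
  | succ K ih =>
    intro y hU hL
    classical
    obtain ⟨y', hy', z, hz, hyz⟩ := Submodule.mem_sup.1 (LK_succ_le K hL)
    rw [Finsupp.mem_span_range_iff_exists_finsupp] at hz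
    obtain ⟨cc, hcc⟩ := hz
    set w : G R := cc.sum (fun m a => single (m, -((K : ℤ) + 1)) a) with hw
    have hzw : z = P₂ q₁ r₁ b ^ (K + 1) * w := by
      rw [← hcc, hw, Finsupp.mul_sum]
      refine Finsupp.sum_congr (fun m hm => ?_)
      rw [
        show (single (m, -((K : ℤ) + 1)) (cc m) : G R) = cc m • single (m, -((K : ℤ) + 1)) (1 : R)
          from single_eq_smul _ _, mul_smul_comm]
    have hwsupp : ∀ p ∈ w.coeff.support, p.2 = -((K : ℤ) + 1) := by
      intro p hp
      rw [hw, AddMonoidAlgebra.coeff_finsuppSum] at hp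
      have := Finsupp.support_sum hp
      rw [Finset.mem_biUnion] at this
      obtain ⟨m, hm, hpm⟩ := this
      have := Finsupp.support_single_subset hpm
      rw [Finset.mem_singleton] at this
      rw [this]
    have hzsupp2 : ∀ p ∈ z.coeff.support, p.2 = -((K : ℤ) + 1) := by
      intro p hp
      rw [hzw] at hp
      obtain ⟨x, yy, hx, hy2, rfl⟩ := support_mul' (P2_pow_support (K + 1)) hwsupp p hp
      simp [hx.2, hy2]
    -- z = filter of y along second coordinate = -(K+1)
    have hy'supp : ∀ p ∈ y'.coeff.support, -((K : ℤ)) ≤ p.2 := LK_supp hy'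
    have hzfil : z.coeff = Finsupp.filter (fun p : ℤ × ℤ => p.2 = -((K : ℤ) + 1)) y.coeff := by
      rw [← hyz, AddMonoidAlgebra.coeff_add, Finsupp.filter_add]
      have h1 : Finsupp.filter (fun p : ℤ × ℤ => p.2 = -((K : ℤ) + 1)) y'.coeff = 0 := by
        ext p
        rw [Finsupp.filter_apply]
        split_ifs with hpt
        · by_contra hne
          have := hy'supp p (Finsupp.mem_support_iff.2 hne)
          omega
        · rfl
      have h2 : Finsupp.filter (fun p : ℤ × ℤ => p.2 = -((K : ℤ) + 1)) z.coeff = z.coeff := by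
        ext p
        rw [Finsupp.filter_apply]
        split_ifs with hpt
        · rfl
        · by_contra hne
          exact hpt (hzsupp2 p (Finsupp.mem_support_iff.2 (fun h => hne h.symm)))
      rw [h1, h2, zero_add]
    have hzsupp1 : ∀ p ∈ z.coeff.support, 0 ≤ p.1 := by
      intro p hp
      rw [hzfil, Finsupp.support_filter, Finset.mem_filter] at hp
      exact UJ0_supp hU p hp.1
    have hwsupp1 : ∀ p ∈ w.coeff.support, 0 ≤ p.1 := by
      refine cancel_pow (q₁ := q₁) (r₁ := r₁) hb (K + 1) w _ hwsupp (fun p hp => ?_)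
      rw [← hzw] at hp
      exact hzsupp1 p hp
    have hzA : z ∈ A0 q₁ r₁ q₂ r₂ b c (R := R) := by
      rw [hzw, mul_finsupp_sum]
      refine Submodule.sum_mem _ (fun p hp => ?_)
      refine Submodule.smul_mem _ _ (Submodule.subset_span ⟨0, K + 1, p.1.toNat, 0, ?_⟩)
      rw [pow_zero, one_mul]
      congr 1
      have h1 := hwsupp1 p hp
      have h2 := hwsupp p hp
      have hpe : p = (((p.1.toNat : ℕ) : ℤ) - ((0 : ℕ) : ℤ), ((0 : ℕ) : ℤ) - ((K + 1 : ℕ) : ℤ)) := by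
        rw [Prod.ext_iff]
        refine ⟨?_, ?_⟩
        · simp [Int.toNat_of_nonneg h1]
        · rw [h2]; push_cast; ring
      exact congrArg (fun t => single t (1 : R)) hpe
    have hzU : z ∈ UJ q₂ r₂ c (R := R) 0 := supp_UJ0 hzsupp1
    have hy'U : y' ∈ UJ q₂ r₂ c (R := R) 0 := by
      have : y' = y - z := by rw [← hyz]; ring
      rw [this]
      exact Submodule.sub_mem _ hU hzU
    have := ih y' hy'U hy'
    rw [← hyz]
    exact Submodule.add_mem _ this hzA

/-! ### Outer induction -/

lemma s_pow (j : ℕ) :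
    (single ((0:ℤ), (0:ℤ)) (r₁ : R) : G R) ^ j = single ((0:ℤ), (0:ℤ)) ((r₁ : R) ^ j) := by
  induction j with
  | zero => rw [pow_zero, pow_zero, AddMonoidAlgebra.one_def]; rfl
  | succ j ih => rw [pow_succ, pow_succ, ih, single_mul_single]; rfl

lemma delta_mem (hb : 0 < b) (J : ℕ) (n : ℤ) (hn : n < 0) :
    P₁ q₂ r₂ c ^ (J + 1) * single (-((J : ℤ) + 1), n) 1
      - (((r₁⁻¹ : Rˣ) ^ (-n).toNat : Rˣ) : R) •
        (P₁ q₂ r₂ c ^ (J + 1) * P₂ q₁ r₁ b ^ (-n).toNat * single (-((J : ℤ) + 1), n) 1)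
      ∈ UJ q₂ r₂ c (R := R) J := by
  set k := (-n).toNat with hk
  set X : G R := P₁ q₂ r₂ c ^ (J + 1) * single (-((J : ℤ) + 1), n) 1 with hX
  set s : G R := single ((0:ℤ), (0:ℤ)) (r₁ : R) with hs
  set u : R := (((r₁⁻¹ : Rˣ) ^ k : Rˣ) : R) with hu
  have hur : u * (r₁ : R) ^ k = 1 := by
    rw [hu, ← Units.val_pow_eq_pow_val, ← Units.val_mul, inv_pow, inv_mul_cancel, Units.val_one]
  have hτeq : P₁ q₂ r₂ c ^ (J + 1) * P₂ q₁ r₁ b ^ k * single (-((J : ℤ) + 1), n) 1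
      = X * P₂ q₁ r₁ b ^ k := by
    rw [hX]; ring
  have h1 : X - u • (X * P₂ q₁ r₁ b ^ k) = u • (X * (s ^ k - P₂ q₁ r₁ b ^ k)) := by
    rw [mul_sub, smul_sub]
    congr 1
    rw [hs, s_pow]
    have h : X * single ((0:ℤ),(0:ℤ)) ((r₁:R)^k) = ((r₁:R)^k) • X := by
      rw [mul_comm, single_zero_mul]
    rw [h, smul_smul, hur, one_smul]
  set Q : G R := ∑ i ∈ Finset.range k, P₂ q₁ r₁ b ^ i * s ^ (k - 1 - i) with hQ
  have h2 : s ^ k - P₂ q₁ r₁ b ^ k = -(Q * single ((b:ℤ), (0:ℤ)) (q₁ : R)) := by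
    have hgeo := geom_sum₂_mul (P₂ q₁ r₁ b) s k
    have hPs : P₂ q₁ r₁ b - s = single ((b:ℤ), (0:ℤ)) (q₁ : R) := by
      rw [P₂, hs]; ring
    rw [hPs] at hgeo
    rw [hQ]
    linear_combination hgeo
  have hY : X * single ((b:ℤ), (0:ℤ)) 1
      = P₁ q₂ r₂ c ^ (J + 1) * single (((b:ℕ) : ℤ) - ((J + 1 : ℕ) : ℤ), n) 1 := by
    rw [hX, mul_assoc, single_mul_single, one_mul]
    congr 2
    rw [Prod.ext_iff]
    constructor
    · show -((J:ℤ) + 1) + (b:ℤ) = ((b:ℕ):ℤ) - ((J + 1 : ℕ):ℤ)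
      push_cast; ring
    · show n + 0 = n
      ring
  have h3 : X * (Q * single ((b:ℤ),(0:ℤ)) (q₁:R))
      = (q₁ : R) • (Q * (X * single ((b:ℤ),(0:ℤ)) 1)) := by
    rw [show (single ((b:ℤ),(0:ℤ)) (q₁:R) : G R) = (q₁:R) • single ((b:ℤ),(0:ℤ)) 1
        from single_eq_smul _ _, mul_smul_comm, mul_smul_comm]
    congr 1
    ring
  rw [hτeq, h1, h2, mul_neg, smul_neg, h3]
  refine Submodule.neg_mem _ (Submodule.smul_mem _ _ (Submodule.smul_mem _ _ ?_))
  rw [hY]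
  set Y : G R := P₁ q₂ r₂ c ^ (J + 1) * single (((b:ℕ) : ℤ) - ((J + 1 : ℕ) : ℤ), n) 1 with hYdef
  have hYmem : Y ∈ UJ q₂ r₂ c (R := R) J := G1 J (J + 1) b n (by omega)
  rw [hQ, Finset.sum_mul]
  refine Submodule.sum_mem _ (fun i hi => ?_)
  have h4 : P₂ q₁ r₁ b ^ i * s ^ (k - 1 - i) * Y = ((r₁:R) ^ (k - 1 - i)) • (P₂ q₁ r₁ b ^ i * Y) := by
    rw [hs, s_pow, mul_assoc, single_zero_mul, mul_smul_comm]
  rw [h4]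
  exact Submodule.smul_mem _ _ (P2_pow_mul_UJ hYmem i)

noncomputable def tau (J : ℕ) (n : ℤ) : G R :=
  if 0 ≤ n then P₁ q₂ r₂ c ^ (J + 1) * single (-((J : ℤ) + 1), n) 1
  else (((r₁⁻¹ : Rˣ) ^ (-n).toNat : Rˣ) : R) •
    (P₁ q₂ r₂ c ^ (J + 1) * P₂ q₁ r₁ b ^ (-n).toNat * single (-((J : ℤ) + 1), n) 1)

variable (q₁ r₁ q₂ r₂ b c) in
lemma tau_mem_A0 (J : ℕ) (n : ℤ) :
    tau (q₁ := q₁) (r₁ := r₁) (q₂ := q₂) (r₂ := r₂) (b := b) (c := c) (R := R) J n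
      ∈ A0 q₁ r₁ q₂ r₂ b c := by
  rw [tau]
  split_ifs with h
  · refine Submodule.subset_span ⟨J + 1, 0, 0, n.toNat, ?_⟩
    rw [pow_zero, mul_one]
    have hpe : (-((J:ℤ) + 1), n)
        = (((0:ℕ):ℤ) - ((J + 1 : ℕ):ℤ), ((n.toNat : ℕ) : ℤ) - ((0:ℕ) : ℤ)) := by
      rw [Prod.ext_iff]
      exact ⟨by omega, by omega⟩
    rw [hpe]
  · refine Submodule.smul_mem _ _ (Submodule.subset_span ⟨J + 1, (-n).toNat, 0, 0, ?_⟩)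
    have hpe : (-((J:ℤ) + 1), n)
        = (((0:ℕ):ℤ) - ((J + 1 : ℕ):ℤ), ((0:ℕ) : ℤ) - (((-n).toNat : ℕ) : ℤ)) := by
      rw [Prod.ext_iff]
      exact ⟨by omega, by omega⟩
    rw [hpe]
  
lemma gen_sub_tau_mem (hb : 0 < b) (J : ℕ) (n : ℤ) :
    P₁ q₂ r₂ c ^ (J + 1) * single (-((J : ℤ) + 1), n) 1
      - tau (q₁ := q₁) (r₁ := r₁) (q₂ := q₂) (r₂ := r₂) (b := b) (c := c) (R := R) J n
      ∈ UJ q₂ r₂ c (R := R) J := by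
  rw [tau]
  split_ifs with h
  · rw [sub_self]; exact Submodule.zero_mem _
  · exact delta_mem hb J n (by omega)

lemma outer (hb : 0 < b) : ∀ J : ℕ, ∀ y : G R, y ∈ UJ q₂ r₂ c (R := R) J →
    y ∈ L0 q₁ r₁ b → y ∈ A0 q₁ r₁ q₂ r₂ b c := by
  intro J
  induction J with
  | zero =>
    intro y hU hL
    obtain ⟨K, hK⟩ := mem_L0_iff.1 hL
    exact inner hb K y hU hK
  | succ J ih =>
    intro y hU hL
    obtain ⟨y', hy', z, hz, hyz⟩ := Submodule.mem_sup.1 (UJ_succ_le J hU)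
    rw [Finsupp.mem_span_range_iff_exists_finsupp] at hz
    obtain ⟨cc, hcc⟩ := hz
    set w : G R := cc.sum (fun n a =>
      a • tau (q₁ := q₁) (r₁ := r₁) (q₂ := q₂) (r₂ := r₂) (b := b) (c := c) J n) with hw
    have hwA : w ∈ A0 q₁ r₁ q₂ r₂ b c (R := R) :=
      Submodule.sum_mem _ (fun n hn => Submodule.smul_mem _ _ (tau_mem_A0 q₁ r₁ q₂ r₂ b c J n))
    have hzw : z - w ∈ UJ q₂ r₂ c (R := R) J := by
      have he : z - w = cc.sum (fun n a =>
          a • (P₁ q₂ r₂ c ^ (J + 1) * single (-((J : ℤ) + 1), n) 1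
            - tau (q₁ := q₁) (r₁ := r₁) (q₂ := q₂) (r₂ := r₂) (b := b) (c := c) J n)) := by
        rw [← hcc, hw, ← Finsupp.sum_sub]
        refine Finsupp.sum_congr (fun n hn => ?_)
        rw [smul_sub]
      rw [he]
      exact Submodule.sum_mem _ (fun n hn => Submodule.smul_mem _ _ (gen_sub_tau_mem hb J n))
    have hyw : y - w ∈ UJ q₂ r₂ c (R := R) J := by
      have : y - w = y' + (z - w) := by rw [← hyz]; ring
      rw [this]
      exact Submodule.add_mem _ hy' hzw
    have hywL : y - w ∈ L0 q₁ r₁ b (R := R) :=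
      Submodule.sub_mem _ hL (A0_le_L0 hwA)
    have := ih (y - w) hyw hywL
    have hfin : y = (y - w) + w := by ring
    rw [hfin]
    exact Submodule.add_mem _ this hwA

variable (q₁ r₁ q₂ r₂ b c) in
theorem U0_inf_L0 (hb : 0 < b) :
    U0 q₂ r₂ c ⊓ L0 q₁ r₁ b = A0 q₁ r₁ q₂ r₂ b c (R := R) := by
  refine le_antisymm (fun y hy => ?_) (le_inf A0_le_U0 A0_le_L0)
  obtain ⟨J, hJ⟩ := mem_U0_iff.1 hy.1
  exact outer hb J y hJ hy.2

/-! ### Multiplicative structure of the spans -/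

lemma U0_one_mem : (1 : G R) ∈ U0 q₂ r₂ c := by
  refine Submodule.subset_span ⟨0, 0, 0, ?_⟩
  rw [pow_zero, one_mul, AddMonoidAlgebra.one_def]
  exact congrArg (fun t => single t (1:R)) (by rw [Prod.ext_iff]; constructor <;> simp)

lemma L0_one_mem : (1 : G R) ∈ L0 q₁ r₁ b := by
  refine Submodule.subset_span ⟨0, 0, 0, ?_⟩
  rw [pow_zero, one_mul, AddMonoidAlgebra.one_def]
  exact congrArg (fun t => single t (1:R)) (by rw [Prod.ext_iff]; constructor <;> simp)

lemma A0_one_mem : (1 : G R) ∈ A0 q₁ r₁ q₂ r₂ b c := by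
  refine Submodule.subset_span ⟨0, 0, 0, 0, ?_⟩
  rw [pow_zero, pow_zero, one_mul, one_mul, AddMonoidAlgebra.one_def]
  exact congrArg (fun t => single t (1:R)) (by rw [Prod.ext_iff]; constructor <;> simp)

lemma U0_mul_mem {x y : G R} (hx : x ∈ U0 q₂ r₂ c) (hy : y ∈ U0 q₂ r₂ c) :
    x * y ∈ U0 q₂ r₂ c := by
  have h := Submodule.mul_mem_mul hx hy
  rw [U0, Submodule.span_mul_span] at h
  refine Submodule.span_le.2 ?_ h
  rintro z hz
  rw [Set.mem_mul] at hz
  obtain ⟨g, hg, g', hg', rfl⟩ := hz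
  obtain ⟨j, m, n, rfl⟩ := hg
  obtain ⟨j', m', n', rfl⟩ := hg'
  refine Submodule.subset_span ⟨j + j', m + m', n + n', ?_⟩
  have e : ((m:ℤ) - j, n) + ((m':ℤ) - j', n')
      = (((m + m' : ℕ):ℤ) - ((j + j' : ℕ):ℤ), n + n') := by
    rw [Prod.mk_add_mk, Prod.ext_iff]
    exact ⟨by push_cast; ring, rfl⟩
  rw [mul_mul_mul_comm, single_mul_single, one_mul, e, pow_add]

lemma L0_mul_mem {x y : G R} (hx : x ∈ L0 q₁ r₁ b) (hy : y ∈ L0 q₁ r₁ b) :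
    x * y ∈ L0 q₁ r₁ b := by
  have h := Submodule.mul_mem_mul hx hy
  rw [L0, Submodule.span_mul_span] at h
  refine Submodule.span_le.2 ?_ h
  rintro z hz
  rw [Set.mem_mul] at hz
  obtain ⟨g, hg, g', hg', rfl⟩ := hz
  obtain ⟨k, n, m, rfl⟩ := hg
  obtain ⟨k', n', m', rfl⟩ := hg'
  refine Submodule.subset_span ⟨k + k', n + n', m + m', ?_⟩
  have e : (m, (n:ℤ) - k) + (m', (n':ℤ) - k')
      = (m + m', ((n + n' : ℕ):ℤ) - ((k + k' : ℕ):ℤ)) := by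
    rw [Prod.mk_add_mk, Prod.ext_iff]
    exact ⟨rfl, by push_cast; ring⟩
  rw [mul_mul_mul_comm, single_mul_single, one_mul, e, pow_add]

lemma A0_mul_mem {x y : G R} (hx : x ∈ A0 q₁ r₁ q₂ r₂ b c) (hy : y ∈ A0 q₁ r₁ q₂ r₂ b c) :
    x * y ∈ A0 q₁ r₁ q₂ r₂ b c := by
  have h := Submodule.mul_mem_mul hx hy
  rw [A0, Submodule.span_mul_span] at h
  refine Submodule.span_le.2 ?_ h
  rintro z hz
  rw [Set.mem_mul] at hz
  obtain ⟨g, hg, g', hg', rfl⟩ := hz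
  obtain ⟨j, k, m, n, rfl⟩ := hg
  obtain ⟨j', k', m', n', rfl⟩ := hg'
  refine Submodule.subset_span ⟨j + j', k + k', m + m', n + n', ?_⟩
  have e : ((m:ℤ) - j, (n:ℤ) - k) + ((m':ℤ) - j', (n':ℤ) - k')
      = (((m + m' : ℕ):ℤ) - ((j + j' : ℕ):ℤ), ((n + n' : ℕ):ℤ) - ((k + k' : ℕ):ℤ)) := by
    rw [Prod.mk_add_mk, Prod.ext_iff]
    exact ⟨by push_cast; ring, by push_cast; ring⟩
  have h1 : (single ((m:ℤ) - j, (n:ℤ) - k) 1 : G R) * single ((m':ℤ) - j', (n':ℤ) - k') 1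
      = single (((m + m' : ℕ):ℤ) - ((j + j' : ℕ):ℤ), ((n + n' : ℕ):ℤ) - ((k + k' : ℕ):ℤ)) 1 := by
    rw [single_mul_single, one_mul, e]
  calc P₁ q₂ r₂ c ^ j * P₂ q₁ r₁ b ^ k * single ((m:ℤ) - j, (n:ℤ) - k) 1 *
        (P₁ q₂ r₂ c ^ j' * P₂ q₁ r₁ b ^ k' * single ((m':ℤ) - j', (n':ℤ) - k') 1)
      = (P₁ q₂ r₂ c ^ j * P₁ q₂ r₂ c ^ j') * (P₂ q₁ r₁ b ^ k * P₂ q₁ r₁ b ^ k') *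
        (single ((m:ℤ) - j, (n:ℤ) - k) 1 * single ((m':ℤ) - j', (n':ℤ) - k') 1) := by ring
    _ = _ := by rw [h1, ← pow_add, ← pow_add]

variable (q₁ r₁ q₂ r₂ b c) in
noncomputable def U0alg : Subalgebra R (G R) :=
  (U0 q₂ r₂ c).toSubalgebra U0_one_mem (fun _ _ hx hy => U0_mul_mem hx hy)

variable (q₁ r₁ q₂ r₂ b c) in
noncomputable def L0alg : Subalgebra R (G R) :=
  (L0 q₁ r₁ b).toSubalgebra L0_one_mem (fun _ _ hx hy => L0_mul_mem hx hy)

variable (q₁ r₁ q₂ r₂ b c) in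
noncomputable def A0alg : Subalgebra R (G R) :=
  (A0 q₁ r₁ q₂ r₂ b c).toSubalgebra A0_one_mem (fun _ _ hx hy => A0_mul_mem hx hy)

lemma mem_U0alg {x : G R} : x ∈ U0alg q₂ r₂ c ↔ x ∈ U0 q₂ r₂ c := Iff.rfl
lemma mem_L0alg {x : G R} : x ∈ L0alg q₁ r₁ b ↔ x ∈ L0 q₁ r₁ b := Iff.rfl
lemma mem_A0alg {x : G R} : x ∈ A0alg q₁ r₁ q₂ r₂ b c ↔ x ∈ A0 q₁ r₁ q₂ r₂ b c := Iff.rfl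

end Gside

/-! ### The evaluation homomorphism to a field -/

variable {F : Type*} [Field F] [Algebra R F]

noncomputable def mon (x₁ x₂ : F) (hx₁ : x₁ ≠ 0) (hx₂ : x₂ ≠ 0) :
    Multiplicative (ℤ × ℤ) →* F where
  toFun p := x₁ ^ (Multiplicative.toAdd p).1 * x₂ ^ (Multiplicative.toAdd p).2
  map_one' := by simp
  map_mul' p q := by
    show x₁ ^ ((Multiplicative.toAdd p).1 + (Multiplicative.toAdd q).1) *
        x₂ ^ ((Multiplicative.toAdd p).2 + (Multiplicative.toAdd q).2) = _
    rw [zpow_add₀ hx₁, zpow_add₀ hx₂]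
    ring

noncomputable def Psi (x₁ x₂ : F) (hx₁ : x₁ ≠ 0) (hx₂ : x₂ ≠ 0) : G R →ₐ[R] F :=
  AddMonoidAlgebra.lift R F (ℤ × ℤ) (mon x₁ x₂ hx₁ hx₂)

lemma Psi_single (x₁ x₂ : F) (hx₁ : x₁ ≠ 0) (hx₂ : x₂ ≠ 0) (p : ℤ × ℤ) (a : R) :
    Psi x₁ x₂ hx₁ hx₂ (single p a) = a • (x₁ ^ p.1 * x₂ ^ p.2) := by
  rw [Psi, AddMonoidAlgebra.lift_single]
  rfl

section Fside

variable (q₁ r₁ q₂ r₂ : Rˣ) (b c : ℕ)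
variable (x₁ x₂ x₁' x₂' : F) (hx₁ : x₁ ≠ 0) (hx₂ : x₂ ≠ 0)

lemma Psi_P1
    (hx₁' : x₁ * x₁' = algebraMap R F (q₂ : R) * x₂ ^ c + algebraMap R F (r₂ : R)) :
    Psi x₁ x₂ hx₁ hx₂ (P₁ q₂ r₂ c) = x₁ * x₁' := by
  rw [P₁, map_add, Psi_single, Psi_single, hx₁']
  rw [Algebra.smul_def, Algebra.smul_def]
  simp [zpow_natCast]

lemma Psi_P2
    (hx₂' : x₂ * x₂' = algebraMap R F (q₁ : R) * x₁ ^ b + algebraMap R F (r₁ : R)) :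
    Psi x₁ x₂ hx₁ hx₂ (P₂ q₁ r₁ b) = x₂ * x₂' := by
  rw [P₂, map_add, Psi_single, Psi_single, hx₂']
  rw [Algebra.smul_def, Algebra.smul_def]
  simp [zpow_natCast]

lemma juggle (x y : F) (hx : x ≠ 0) (j m : ℕ) (z : F) :
    (x * y) ^ j * (x ^ ((m : ℤ) - (j : ℤ)) * z) = y ^ j * (x ^ (m : ℤ) * z) := by
  rw [mul_pow, show x ^ j * y ^ j * (x ^ ((m : ℤ) - (j : ℤ)) * z)
      = y ^ j * ((x ^ (j : ℤ) * x ^ ((m : ℤ) - (j : ℤ))) * z) by rw [zpow_natCast]; ring,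
    ← zpow_add₀ hx]
  congr 3
  ring

lemma Psi_gen
    (hx₁' : x₁ * x₁' = algebraMap R F (q₂ : R) * x₂ ^ c + algebraMap R F (r₂ : R))
    (hx₂' : x₂ * x₂' = algebraMap R F (q₁ : R) * x₁ ^ b + algebraMap R F (r₁ : R))
    (j k : ℕ) (s t : ℤ) :
    Psi x₁ x₂ hx₁ hx₂ (P₁ q₂ r₂ c ^ j * P₂ q₁ r₁ b ^ k * single (s, t) 1)
      = (x₁ * x₁') ^ j * ((x₂ * x₂') ^ k * (x₁ ^ s * x₂ ^ t)) := by
  rw [map_mul, map_mul, map_pow, map_pow, Psi_P1 q₂ r₂ c x₁ x₂ x₁' hx₁ hx₂ hx₁',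
    Psi_P2 q₁ r₁ b x₁ x₂ x₂' hx₁ hx₂ hx₂', Psi_single, one_smul, mul_assoc]

lemma zpow_mem {S : Subalgebra R F} {x : F} (hx : x ∈ S) (hxi : x⁻¹ ∈ S) (n : ℤ) :
    x ^ n ∈ S := by
  cases n with
  | ofNat k => simpa using pow_mem hx k
  | negSucc k =>
    rw [zpow_negSucc, ← inv_pow]
    exact pow_mem hxi (k + 1)

end Fside

/-! ### Injectivity of Psi for the concrete fraction field -/

section Injectivity

open MvPolynomial

noncomputable def toMv (g : G R) : MvPolynomial (Fin 2) R :=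
  g.coeff.sum (fun p a =>
    monomial (Finsupp.single (0 : Fin 2) p.1.toNat + Finsupp.single 1 p.2.toNat) a)

lemma expo_apply_zero (m n : ℕ) :
    ((Finsupp.single (0 : Fin 2) m + Finsupp.single (1 : Fin 2) n : Fin 2 →₀ ℕ)) 0 = m := by
  rw [Finsupp.add_apply, Finsupp.single_eq_same, Finsupp.single_eq_of_ne (by decide), add_zero]

lemma expo_apply_one (m n : ℕ) :
    ((Finsupp.single (0 : Fin 2) m + Finsupp.single (1 : Fin 2) n : Fin 2 →₀ ℕ)) 1 = n := by
  rw [Finsupp.add_apply, Finsupp.single_eq_same, Finsupp.single_eq_of_ne (by decide), zero_add]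

lemma expo_inj {p q : ℤ × ℤ} (hp1 : 0 ≤ p.1) (hp2 : 0 ≤ p.2) (hq1 : 0 ≤ q.1) (hq2 : 0 ≤ q.2)
    (h : Finsupp.single (0 : Fin 2) p.1.toNat + Finsupp.single 1 p.2.toNat
       = Finsupp.single (0 : Fin 2) q.1.toNat + Finsupp.single 1 q.2.toNat) : p = q := by
  have h0 := DFunLike.congr_fun h 0
  have h1 := DFunLike.congr_fun h 1
  rw [expo_apply_zero, expo_apply_zero] at h0
  rw [expo_apply_one, expo_apply_one] at h1
  rw [Prod.ext_iff]
  omega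

lemma toMv_eq_zero {g : G R} (hg : ∀ p ∈ g.coeff.support, 0 ≤ p.1 ∧ 0 ≤ p.2)
    (h : toMv g = 0) : g = 0 := by
  by_contra hne
  obtain ⟨p₀, hp₀⟩ := Finsupp.support_nonempty_iff.2 (fun h => hne (AddMonoidAlgebra.coeff_eq_zero.1 h))
  have hco : MvPolynomial.coeff (Finsupp.single (0 : Fin 2) p₀.1.toNat + Finsupp.single 1 p₀.2.toNat)
      (toMv g) = g.coeff p₀ := by
    rw [toMv, Finsupp.sum, MvPolynomial.coeff_sum]
    rw [Finset.sum_eq_single p₀]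
    · rw [MvPolynomial.coeff_monomial, if_pos rfl]
    · intro p hp hpne
      rw [MvPolynomial.coeff_monomial, if_neg]
      intro heq
      exact hpne (expo_inj (hg p hp).1 (hg p hp).2 (hg p₀ hp₀).1 (hg p₀ hp₀).2 heq)
    · intro hab
      exact absurd hp₀ hab
  rw [h] at hco
  simp only [MvPolynomial.coeff_zero] at hco
  exact Finsupp.mem_support_iff.1 hp₀ hco.symm

variable (R) in
noncomputable abbrev Fc := FractionRing (MvPolynomial (Fin 2) R)

lemma xx_ne_zero (i : Fin 2) : (algebraMap (MvPolynomial (Fin 2) R) (Fc R) (X i)) ≠ 0 := by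
  rw [Ne, IsFractionRing.to_map_eq_zero_iff]
  exact X_ne_zero i

lemma Psi_eq_algebraMap_toMv {g : G R} (hg : ∀ p ∈ g.coeff.support, 0 ≤ p.1 ∧ 0 ≤ p.2) :
    Psi (algebraMap (MvPolynomial (Fin 2) R) (Fc R) (X 0))
      (algebraMap (MvPolynomial (Fin 2) R) (Fc R) (X 1)) (xx_ne_zero 0) (xx_ne_zero 1) g
    = algebraMap (MvPolynomial (Fin 2) R) (Fc R) (toMv g) := by
  conv_lhs => rw [← sum_coeff_single g]
  rw [map_finsuppSum, toMv, map_finsuppSum]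
  refine Finsupp.sum_congr (fun p hp => ?_)
  obtain ⟨h1p, h2p⟩ := hg p hp
  show Psi _ _ _ _ (single p (g.coeff p)) = _
  rw [Psi_single]
  have hmono : monomial (Finsupp.single (0 : Fin 2) p.1.toNat + Finsupp.single 1 p.2.toNat) (g.coeff p)
      = C (g.coeff p) * X 0 ^ p.1.toNat * X 1 ^ p.2.toNat := by
    rw [X_pow_eq_monomial, X_pow_eq_monomial, C_apply, monomial_mul, monomial_mul]
    rw [mul_one, mul_one, zero_add]
  rw [hmono, map_mul, map_mul, map_pow, map_pow, Algebra.smul_def]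
  have hC : algebraMap R (Fc R) (g.coeff p)
      = algebraMap (MvPolynomial (Fin 2) R) (Fc R) (C (g.coeff p)) := by
    rw [← MvPolynomial.algebraMap_eq, ← IsScalarTower.algebraMap_apply]
  rw [hC, ← zpow_natCast (algebraMap (MvPolynomial (Fin 2) R) (Fc R) (X 0)),
    ← zpow_natCast (algebraMap (MvPolynomial (Fin 2) R) (Fc R) (X 1)),
    Int.toNat_of_nonneg h1p, Int.toNat_of_nonneg h2p]
  ring

lemma Psi_injective : Function.Injective
    (Psi (algebraMap (MvPolynomial (Fin 2) R) (Fc R) (X 0))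
      (algebraMap (MvPolynomial (Fin 2) R) (Fc R) (X 1)) (xx_ne_zero 0) (xx_ne_zero 1)
      : G R →ₐ[R] Fc R) := by
  rw [injective_iff_map_eq_zero]
  intro f hf
  set N := f.coeff.support.sup (fun p => (-p.1).toNat ⊔ (-p.2).toNat) with hN
  set g : G R := single ((N:ℤ), (N:ℤ)) (1:R) * f with hgdef
  have hgsupp : ∀ p ∈ g.coeff.support, 0 ≤ p.1 ∧ 0 ≤ p.2 := by
    intro p hp
    obtain ⟨a, q, ha, hq, rfl⟩ := support_mul'
      (support_single_sub ((N:ℤ), (N:ℤ)) (1:R))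
      (fun p (hp : p ∈ f.coeff.support) => hp) p hp
    subst ha
    have h1 : (-q.1).toNat ≤ N :=
      le_trans le_sup_left (Finset.le_sup (f := fun p : ℤ×ℤ => (-p.1).toNat ⊔ (-p.2).toNat) hq)
    have h2 : (-q.2).toNat ≤ N :=
      le_trans le_sup_right (Finset.le_sup (f := fun p : ℤ×ℤ => (-p.1).toNat ⊔ (-p.2).toNat) hq)
    constructor
    · show (0:ℤ) ≤ (N:ℤ) + q.1
      omega
    · show (0:ℤ) ≤ (N:ℤ) + q.2
      omega
  have hPg : Psi (algebraMap (MvPolynomial (Fin 2) R) (Fc R) (X 0))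
      (algebraMap (MvPolynomial (Fin 2) R) (Fc R) (X 1))
      (xx_ne_zero 0) (xx_ne_zero 1) g = 0 := by
    rw [hgdef, map_mul, hf, mul_zero]
  rw [Psi_eq_algebraMap_toMv hgsupp] at hPg
  have h0' : toMv g = 0 := IsFractionRing.to_map_eq_zero_iff.1 hPg
  have hgz : g = 0 := toMv_eq_zero hgsupp h0'
  have hrec : f = single ((-(N:ℤ)), (-(N:ℤ))) 1 * g := by
    rw [hgdef, ← mul_assoc, single_mul_single, one_mul]
    have : ((-(N:ℤ)) + (N:ℤ), (-(N:ℤ)) + (N:ℤ)) = ((0:ℤ), (0:ℤ)) := by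
      rw [Prod.ext_iff]; omega
    rw [Prod.mk_add_mk, this, show ((0:ℤ),(0:ℤ)) = (0 : ℤ×ℤ) from rfl, ← AddMonoidAlgebra.one_def, one_mul]
  rw [hrec, hgz, mul_zero]

end Injectivity

/-! ### Assembly -/

section Assembly

variable (q₁ r₁ q₂ r₂ : Rˣ) (b c : ℕ)
variable (x₁ x₂ x₁' x₂' : F) (hx₁ : x₁ ≠ 0) (hx₂ : x₂ ≠ 0)

lemma Psi_Ugen
    (hx₁' : x₁ * x₁' = algebraMap R F (q₂ : R) * x₂ ^ c + algebraMap R F (r₂ : R))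
    (j m : ℕ) (n : ℤ) :
    Psi x₁ x₂ hx₁ hx₂ (P₁ q₂ r₂ c ^ j * single ((m:ℤ) - j, n) 1)
      = x₁' ^ j * (x₁ ^ (m:ℤ) * x₂ ^ n) := by
  rw [map_mul, map_pow, Psi_P1 q₂ r₂ c x₁ x₂ x₁' hx₁ hx₂ hx₁', Psi_single, one_smul,
    juggle x₁ x₁' hx₁]

lemma Psi_Lgen
    (hx₂' : x₂ * x₂' = algebraMap R F (q₁ : R) * x₁ ^ b + algebraMap R F (r₁ : R))
    (k n : ℕ) (m : ℤ) :
    Psi x₁ x₂ hx₁ hx₂ (P₂ q₁ r₁ b ^ k * single (m, (n:ℤ) - k) 1)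
      = x₂' ^ k * (x₂ ^ (n:ℤ) * x₁ ^ m) := by
  rw [map_mul, map_pow, Psi_P2 q₁ r₁ b x₁ x₂ x₂' hx₁ hx₂ hx₂', Psi_single, one_smul,
    mul_comm (x₁ ^ m) (x₂ ^ ((n:ℤ) - k)), juggle x₂ x₂' hx₂]

lemma Psi_Agen
    (hx₁' : x₁ * x₁' = algebraMap R F (q₂ : R) * x₂ ^ c + algebraMap R F (r₂ : R))
    (hx₂' : x₂ * x₂' = algebraMap R F (q₁ : R) * x₁ ^ b + algebraMap R F (r₁ : R))
    (j k m n : ℕ) :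
    Psi x₁ x₂ hx₁ hx₂ (P₁ q₂ r₂ c ^ j * P₂ q₁ r₁ b ^ k * single ((m:ℤ) - j, (n:ℤ) - k) 1)
      = x₁' ^ j * (x₁ ^ (m:ℤ) * (x₂' ^ k * (x₂ ^ (n:ℤ) * 1))) := by
  rw [Psi_gen q₁ r₁ q₂ r₂ b c x₁ x₂ x₁' x₂' hx₁ hx₂ hx₁' hx₂']
  rw [show (x₂ * x₂') ^ k * (x₁ ^ ((m:ℤ) - j) * x₂ ^ ((n:ℤ) - k))
      = (x₂ * x₂') ^ k * (x₂ ^ ((n:ℤ) - k) * x₁ ^ ((m:ℤ) - j)) from by ring,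
    juggle x₂ x₂' hx₂,
    show x₂' ^ k * (x₂ ^ (n:ℤ) * x₁ ^ ((m:ℤ) - j)) = x₁ ^ ((m:ℤ) - j) * (x₂' ^ k * (x₂ ^ (n:ℤ) * 1))
      from by ring,
    juggle x₁ x₁' hx₁]

lemma adjoinU_eq
    (hx₁' : x₁ * x₁' = algebraMap R F (q₂ : R) * x₂ ^ c + algebraMap R F (r₂ : R)) :
    Algebra.adjoin R ({x₁, x₁', x₂, x₂⁻¹} : Set F)
      = (U0alg q₂ r₂ c).map (Psi x₁ x₂ hx₁ hx₂ : G R →ₐ[R] F) := by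
  apply le_antisymm
  · rw [Algebra.adjoin_le_iff]
    have m1 : x₁ ∈ (U0alg q₂ r₂ c).map (Psi x₁ x₂ hx₁ hx₂ : G R →ₐ[R] F) :=
      Subalgebra.mem_map.2 ⟨_, Submodule.subset_span ⟨0, 1, 0, rfl⟩,
        by rw [Psi_Ugen q₂ r₂ c x₁ x₂ x₁' hx₁ hx₂ hx₁' 0 1 0]; norm_num⟩
    have m2 : x₁' ∈ (U0alg q₂ r₂ c).map (Psi x₁ x₂ hx₁ hx₂ : G R →ₐ[R] F) :=
      Subalgebra.mem_map.2 ⟨_, Submodule.subset_span ⟨1, 0, 0, rfl⟩,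
        by rw [Psi_Ugen q₂ r₂ c x₁ x₂ x₁' hx₁ hx₂ hx₁' 1 0 0]; norm_num⟩
    have m3 : x₂ ∈ (U0alg q₂ r₂ c).map (Psi x₁ x₂ hx₁ hx₂ : G R →ₐ[R] F) :=
      Subalgebra.mem_map.2 ⟨_, Submodule.subset_span ⟨0, 0, 1, rfl⟩,
        by rw [Psi_Ugen q₂ r₂ c x₁ x₂ x₁' hx₁ hx₂ hx₁' 0 0 1]; norm_num⟩
    have m4 : x₂⁻¹ ∈ (U0alg q₂ r₂ c).map (Psi x₁ x₂ hx₁ hx₂ : G R →ₐ[R] F) :=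
      Subalgebra.mem_map.2 ⟨_, Submodule.subset_span ⟨0, 0, -1, rfl⟩,
        by rw [Psi_Ugen q₂ r₂ c x₁ x₂ x₁' hx₁ hx₂ hx₁' 0 0 (-1)]; norm_num [zpow_neg_one]⟩
    intro x hx
    simp only [Set.mem_insert_iff, Set.mem_singleton_iff] at hx
    rcases hx with rfl | rfl | rfl | rfl <;> assumption
  · intro x hx
    obtain ⟨g, hg, rfl⟩ := Subalgebra.mem_map.1 hx
    clear hx
    rw [mem_U0alg] at hg
    have h1 : x₁ ∈ Algebra.adjoin R ({x₁, x₁', x₂, x₂⁻¹} : Set F) :=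
      Algebra.subset_adjoin (by simp)
    have h1' : x₁' ∈ Algebra.adjoin R ({x₁, x₁', x₂, x₂⁻¹} : Set F) :=
      Algebra.subset_adjoin (by simp)
    have h2 : x₂ ∈ Algebra.adjoin R ({x₁, x₁', x₂, x₂⁻¹} : Set F) :=
      Algebra.subset_adjoin (by simp)
    have h2i : x₂⁻¹ ∈ Algebra.adjoin R ({x₁, x₁', x₂, x₂⁻¹} : Set F) :=
      Algebra.subset_adjoin (by simp)
    induction hg using Submodule.span_induction with
    | mem g hgg =>
      obtain ⟨j, m, n, rfl⟩ := hgg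
      rw [Psi_Ugen q₂ r₂ c x₁ x₂ x₁' hx₁ hx₂ hx₁' j m n]
      refine mul_mem (pow_mem h1' j) (mul_mem ?_ (zpow_mem h2 h2i n))
      rw [zpow_natCast]
      exact pow_mem h1 m
    | zero => rw [map_zero]; exact zero_mem _
    | add u v _ _ hu hv => rw [map_add]; exact add_mem hu hv
    | smul a u _ hu => rw [map_smul]; exact Subalgebra.smul_mem _ hu a

lemma adjoinL_eq
    (hx₂' : x₂ * x₂' = algebraMap R F (q₁ : R) * x₁ ^ b + algebraMap R F (r₁ : R)) :
    Algebra.adjoin R ({x₁, x₁⁻¹, x₂, x₂'} : Set F)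
      = (L0alg q₁ r₁ b).map (Psi x₁ x₂ hx₁ hx₂ : G R →ₐ[R] F) := by
  apply le_antisymm
  · rw [Algebra.adjoin_le_iff]
    have m1 : x₁ ∈ (L0alg q₁ r₁ b).map (Psi x₁ x₂ hx₁ hx₂ : G R →ₐ[R] F) :=
      Subalgebra.mem_map.2 ⟨_, Submodule.subset_span ⟨0, 0, 1, rfl⟩,
        by rw [Psi_Lgen q₁ r₁ b x₁ x₂ x₂' hx₁ hx₂ hx₂' 0 0 1]; norm_num⟩
    have m2 : x₁⁻¹ ∈ (L0alg q₁ r₁ b).map (Psi x₁ x₂ hx₁ hx₂ : G R →ₐ[R] F) :=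
      Subalgebra.mem_map.2 ⟨_, Submodule.subset_span ⟨0, 0, -1, rfl⟩,
        by rw [Psi_Lgen q₁ r₁ b x₁ x₂ x₂' hx₁ hx₂ hx₂' 0 0 (-1)]; norm_num [zpow_neg_one]⟩
    have m3 : x₂ ∈ (L0alg q₁ r₁ b).map (Psi x₁ x₂ hx₁ hx₂ : G R →ₐ[R] F) :=
      Subalgebra.mem_map.2 ⟨_, Submodule.subset_span ⟨0, 1, 0, rfl⟩,
        by rw [Psi_Lgen q₁ r₁ b x₁ x₂ x₂' hx₁ hx₂ hx₂' 0 1 0]; norm_num⟩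
    have m4 : x₂' ∈ (L0alg q₁ r₁ b).map (Psi x₁ x₂ hx₁ hx₂ : G R →ₐ[R] F) :=
      Subalgebra.mem_map.2 ⟨_, Submodule.subset_span ⟨1, 0, 0, rfl⟩,
        by rw [Psi_Lgen q₁ r₁ b x₁ x₂ x₂' hx₁ hx₂ hx₂' 1 0 0]; norm_num⟩
    intro x hx
    simp only [Set.mem_insert_iff, Set.mem_singleton_iff] at hx
    rcases hx with rfl | rfl | rfl | rfl <;> assumption
  · intro x hx
    obtain ⟨g, hg, rfl⟩ := Subalgebra.mem_map.1 hx
    clear hx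
    rw [mem_L0alg] at hg
    have h1 : x₁ ∈ Algebra.adjoin R ({x₁, x₁⁻¹, x₂, x₂'} : Set F) :=
      Algebra.subset_adjoin (by simp)
    have h1i : x₁⁻¹ ∈ Algebra.adjoin R ({x₁, x₁⁻¹, x₂, x₂'} : Set F) :=
      Algebra.subset_adjoin (by simp)
    have h2 : x₂ ∈ Algebra.adjoin R ({x₁, x₁⁻¹, x₂, x₂'} : Set F) :=
      Algebra.subset_adjoin (by simp)
    have h2' : x₂' ∈ Algebra.adjoin R ({x₁, x₁⁻¹, x₂, x₂'} : Set F) :=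
      Algebra.subset_adjoin (by simp)
    induction hg using Submodule.span_induction with
    | mem g hgg =>
      obtain ⟨k, n, m, rfl⟩ := hgg
      rw [Psi_Lgen q₁ r₁ b x₁ x₂ x₂' hx₁ hx₂ hx₂' k n m]
      refine mul_mem (pow_mem h2' k) (mul_mem ?_ (zpow_mem h1 h1i m))
      rw [zpow_natCast]
      exact pow_mem h2 n
    | zero => rw [map_zero]; exact zero_mem _
    | add u v _ _ hu hv => rw [map_add]; exact add_mem hu hv
    | smul a u _ hu => rw [map_smul]; exact Subalgebra.smul_mem _ hu a

lemma adjoinA_eq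
    (hx₁' : x₁ * x₁' = algebraMap R F (q₂ : R) * x₂ ^ c + algebraMap R F (r₂ : R))
    (hx₂' : x₂ * x₂' = algebraMap R F (q₁ : R) * x₁ ^ b + algebraMap R F (r₁ : R)) :
    Algebra.adjoin R ({x₁, x₁', x₂, x₂'} : Set F)
      = (A0alg q₁ r₁ q₂ r₂ b c).map (Psi x₁ x₂ hx₁ hx₂ : G R →ₐ[R] F) := by
  apply le_antisymm
  · rw [Algebra.adjoin_le_iff]
    have m1 : x₁ ∈ (A0alg q₁ r₁ q₂ r₂ b c).map (Psi x₁ x₂ hx₁ hx₂ : G R →ₐ[R] F) :=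
      Subalgebra.mem_map.2 ⟨_, Submodule.subset_span ⟨0, 0, 1, 0, rfl⟩,
        by rw [Psi_Agen q₁ r₁ q₂ r₂ b c x₁ x₂ x₁' x₂' hx₁ hx₂ hx₁' hx₂' 0 0 1 0]; norm_num⟩
    have m2 : x₁' ∈ (A0alg q₁ r₁ q₂ r₂ b c).map (Psi x₁ x₂ hx₁ hx₂ : G R →ₐ[R] F) :=
      Subalgebra.mem_map.2 ⟨_, Submodule.subset_span ⟨1, 0, 0, 0, rfl⟩,
        by rw [Psi_Agen q₁ r₁ q₂ r₂ b c x₁ x₂ x₁' x₂' hx₁ hx₂ hx₁' hx₂' 1 0 0 0]; norm_num⟩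
    have m3 : x₂ ∈ (A0alg q₁ r₁ q₂ r₂ b c).map (Psi x₁ x₂ hx₁ hx₂ : G R →ₐ[R] F) :=
      Subalgebra.mem_map.2 ⟨_, Submodule.subset_span ⟨0, 0, 0, 1, rfl⟩,
        by rw [Psi_Agen q₁ r₁ q₂ r₂ b c x₁ x₂ x₁' x₂' hx₁ hx₂ hx₁' hx₂' 0 0 0 1]; norm_num⟩
    have m4 : x₂' ∈ (A0alg q₁ r₁ q₂ r₂ b c).map (Psi x₁ x₂ hx₁ hx₂ : G R →ₐ[R] F) :=
      Subalgebra.mem_map.2 ⟨_, Submodule.subset_span ⟨0, 1, 0, 0, rfl⟩,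
        by rw [Psi_Agen q₁ r₁ q₂ r₂ b c x₁ x₂ x₁' x₂' hx₁ hx₂ hx₁' hx₂' 0 1 0 0]; norm_num⟩
    intro x hx
    simp only [Set.mem_insert_iff, Set.mem_singleton_iff] at hx
    rcases hx with rfl | rfl | rfl | rfl <;> assumption
  · intro x hx
    obtain ⟨g, hg, rfl⟩ := Subalgebra.mem_map.1 hx
    clear hx
    rw [mem_A0alg] at hg
    have h1 : x₁ ∈ Algebra.adjoin R ({x₁, x₁', x₂, x₂'} : Set F) :=
      Algebra.subset_adjoin (by simp)
    have h1' : x₁' ∈ Algebra.adjoin R ({x₁, x₁', x₂, x₂'} : Set F) :=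
      Algebra.subset_adjoin (by simp)
    have h2 : x₂ ∈ Algebra.adjoin R ({x₁, x₁', x₂, x₂'} : Set F) :=
      Algebra.subset_adjoin (by simp)
    have h2' : x₂' ∈ Algebra.adjoin R ({x₁, x₁', x₂, x₂'} : Set F) :=
      Algebra.subset_adjoin (by simp)
    induction hg using Submodule.span_induction with
    | mem g hgg =>
      obtain ⟨j, k, m, n, rfl⟩ := hgg
      rw [Psi_Agen q₁ r₁ q₂ r₂ b c x₁ x₂ x₁' x₂' hx₁ hx₂ hx₁' hx₂' j k m n]
      refine mul_mem (pow_mem h1' j) (mul_mem ?_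
        (mul_mem (pow_mem h2' k) (mul_mem ?_ (one_mem _))))
      · rw [zpow_natCast]; exact pow_mem h1 m
      · rw [zpow_natCast]; exact pow_mem h2 n
    | zero => rw [map_zero]; exact zero_mem _
    | add u v _ _ hu hv => rw [map_add]; exact add_mem hu hv
    | smul a u _ hu => rw [map_smul]; exact Subalgebra.smul_mem _ hu a

theorem main_abstract (hb : 0 < b)
    (hinj : Function.Injective (Psi x₁ x₂ hx₁ hx₂ : G R →ₐ[R] F))
    (hx₁' : x₁ * x₁' = algebraMap R F (q₂ : R) * x₂ ^ c + algebraMap R F (r₂ : R))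
    (hx₂' : x₂ * x₂' = algebraMap R F (q₁ : R) * x₁ ^ b + algebraMap R F (r₁ : R)) :
    Algebra.adjoin R ({x₁, x₁', x₂, x₂⁻¹} : Set F) ⊓
      Algebra.adjoin R ({x₁, x₁⁻¹, x₂, x₂'} : Set F)
    = Algebra.adjoin R ({x₁, x₁', x₂, x₂'} : Set F) := by
  rw [adjoinU_eq q₂ r₂ c x₁ x₂ x₁' hx₁ hx₂ hx₁',
    adjoinL_eq q₁ r₁ b x₁ x₂ x₂' hx₁ hx₂ hx₂',
    adjoinA_eq q₁ r₁ q₂ r₂ b c x₁ x₂ x₁' x₂' hx₁ hx₂ hx₁' hx₂']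
  ext x
  rw [Algebra.mem_inf]
  constructor
  · rintro ⟨hxu, hxl⟩
    obtain ⟨g, hg, rfl⟩ := Subalgebra.mem_map.1 hxu
    obtain ⟨g', hg', hgg⟩ := Subalgebra.mem_map.1 hxl
    have hge : g' = g := hinj hgg
    subst hge
    rw [mem_U0alg] at hg
    rw [mem_L0alg] at hg'
    have hmem : g' ∈ U0 q₂ r₂ c ⊓ L0 q₁ r₁ b := ⟨hg, hg'⟩
    rw [U0_inf_L0 q₁ r₁ q₂ r₂ b c hb] at hmem
    exact Subalgebra.mem_map.2 ⟨g', (mem_A0alg).2 hmem, rfl⟩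
  · intro hxa
    obtain ⟨g, hg, rfl⟩ := Subalgebra.mem_map.1 hxa
    rw [mem_A0alg] at hg
    exact ⟨Subalgebra.mem_map.2 ⟨g, (mem_U0alg).2 (A0_le_U0 hg), rfl⟩,
      Subalgebra.mem_map.2 ⟨g, (mem_L0alg).2 (A0_le_L0 hg), rfl⟩⟩

end Assembly
end RankTwoAux

/-- Rank-2 coincidence of upper and lower bounds: with exchange relations
`x₁ x'₁ = q₂ x₂^c + r₂` and `x₂ x'₂ = q₁ x₁^b + r₁` (invertible coefficients, positive
exponents), one has `ZP[x₁, x'₁, x₂^{±1}] ∩ ZP[x₁^{±1}, x₂, x'₂] = ZP[x₁, x'₁, x₂, x'₂]`. -/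
theorem rank_two_upper_eq_lower (R : Type*) [CommRing R] [IsDomain R]
    (q₁ r₁ q₂ r₂ : Rˣ) (b c : ℕ) (hb : 0 < b) (hc : 0 < c) :
    letI F := FractionRing (MvPolynomial (Fin 2) R)
    let x₁ : F := Xfrac R 2 0
    let x₂ : F := Xfrac R 2 1
    let x₁' : F := (algebraMap R F (q₂ : R) * x₂ ^ c + algebraMap R F (r₂ : R)) / x₁
    let x₂' : F := (algebraMap R F (q₁ : R) * x₁ ^ b + algebraMap R F (r₁ : R)) / x₂
    Algebra.adjoin R ({x₁, x₁', x₂, x₂⁻¹} : Set F) ⊓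
      Algebra.adjoin R ({x₁, x₁⁻¹, x₂, x₂'} : Set F) =
    Algebra.adjoin R ({x₁, x₁', x₂, x₂'} : Set F) := by
  have hx₁ : (Xfrac R 2 0 : FractionRing (MvPolynomial (Fin 2) R)) ≠ 0 :=
    RankTwoAux.xx_ne_zero 0
  have hx₂ : (Xfrac R 2 1 : FractionRing (MvPolynomial (Fin 2) R)) ≠ 0 :=
    RankTwoAux.xx_ne_zero 1
  refine RankTwoAux.main_abstract q₁ r₁ q₂ r₂ b c (Xfrac R 2 0) (Xfrac R 2 1) _ _ hx₁ hx₂ hb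
    ?_ ?_ ?_
  · exact RankTwoAux.Psi_injective
  · rw [mul_comm, div_mul_cancel₀ _ hx₁]
  · rw [mul_comm, div_mul_cancel₀ _ hx₂]
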